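/- Generalized Röwbottom lemma for sequences of normal measures: Let κ be measurable, δ < κ, τ < κ, and let ⟨U_α : α < δ⟩ be normal κ-complete ultrafilters on κ. For every function f : [κ]^{<ω} → τ there exist sets A_α ∈ U_α (α < δ) such that for every finite sequence ⟨α₀,…,α_{n-1}⟩ of ordinals below δ, f is constant on the set of increasing sequences ⟨ν₀,…,ν_{n-1}⟩ with ν_i ∈ A_{α_i} for each i. -/
import Mathlib


open Cardinal Set

/-- `U` is a `κ`-complete normal (nonprincipal) ultrafilter on the linearly ordered set `O`
(which represents the measurable cardinal `κ`). -/
def IsNormalMeasure (κ : Cardinal) {O : Type} [LinearOrder O] (U : Set (Set O)) : Prop :=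
  (univ : Set O) ∈ U ∧ (∅ : Set O) ∉ U ∧
  (∀ A B : Set O, A ∈ U → A ⊆ B → B ∈ U) ∧
  (∀ A : Set O, A ∈ U ∨ Aᶜ ∈ U) ∧
  (∀ (ι : Type) (_ : Cardinal.mk ι < κ) (A : ι → Set O), (∀ i, A i ∈ U) → (⋂ i, A i) ∈ U) ∧
  (∀ A : O → Set O, (∀ β, A β ∈ U) → {γ : O | ∀ β, β < γ → γ ∈ A β} ∈ U) ∧
  (∀ b : O, {x : O | b < x} ∈ U)

private lemma color_lemma {O : Type} [LinearOrder O] {κ : Cardinal} {σ : Type}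
    (hσ : Cardinal.mk σ < κ) {U : Set (Set O)} (hU : IsNormalMeasure κ U)
    (g : O → σ) : ∃ s, {ν | g ν = s} ∈ U := by
  by_contra h
  push_neg at h
  have hc : ∀ s, {ν | g ν = s}ᶜ ∈ U := fun s => (hU.2.2.2.1 _).resolve_left (h s)
  have hmem := hU.2.2.2.2.1 σ hσ (fun s => {ν | g ν = s}ᶜ) hc
  have hempty : (⋂ s, {ν | g ν = s}ᶜ) = (∅ : Set O) := by
    ext ν
    simp
  rw [hempty] at hmem
  exact hU.2.1 hmem

private lemma rowbottom {O : Type} [LinearOrder O] {κ : Cardinal} {ι σ : Type}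
    (hσ : Cardinal.mk σ < κ) (U : ι → Set (Set O)) (hU : ∀ i, IsNormalMeasure κ (U i)) :
    ∀ (n : ℕ) (g : (Fin n → O) → σ) (a : Fin n → ι),
      ∃ B : Fin n → Set O, (∀ j, B j ∈ U (a j)) ∧
        ∃ s, ∀ v : Fin n → O, StrictMono v → (∀ j, v j ∈ B j) → g v = s := by
  intro n
  induction n with
  | zero =>
    intro g a
    refine ⟨fun j => univ, fun j => j.elim0, g (fun i => i.elim0), fun v _ _ => ?_⟩
    congr 1
    funext i
    exact i.elim0
  | succ n ih =>
    intro g a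
    choose B hB s hs using fun ν : O => ih (fun u => g (Fin.cons ν u)) (fun j => a j.succ)
    obtain ⟨t, ht⟩ := color_lemma hσ (hU (a 0)) s
    refine ⟨Fin.cons {ν | s ν = t} (fun j => {γ | ∀ β, β < γ → γ ∈ B β j}), ?_, t, ?_⟩
    · intro j
      refine Fin.cases ?_ ?_ j
      · exact ht
      · intro j
        simpa using (hU (a j.succ)).2.2.2.2.2.1 (fun β => B β j) (fun β => hB β j)
    · intro v hv hvB
      have h0 : s (v 0) = t := by simpa using hvB 0
      have htail : ∀ j : Fin n, v j.succ ∈ B (v 0) j := by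
        intro j
        have hvj := hvB j.succ
        simp only [Fin.cons_succ] at hvj
        exact hvj (v 0) (hv (Fin.succ_pos j))
      have key := hs (v 0) (fun j => v j.succ) (hv.comp Fin.strictMono_succ) htail
      calc g v = g (Fin.cons (v 0) (fun j => v j.succ)) := by
                  congr 1
                  exact (Fin.cons_self_tail v).symm
        _ = s (v 0) := key
        _ = t := h0

theorem stmt3 {O : Type} [LinearOrder O] (κ : Cardinal) (hO : Cardinal.mk O = κ)
    (hκ : Cardinal.aleph 0 < κ)
    {ι σ : Type} (hι : Cardinal.mk ι < κ) (hσ : Cardinal.mk σ < κ)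
    (U : ι → Set (Set O)) (hU : ∀ i, IsNormalMeasure κ (U i))
    (f : {n : ℕ} → (Fin n → O) → σ) :
    ∃ A : ι → Set O, (∀ i, A i ∈ U i) ∧
      ∀ (n : ℕ) (a : Fin n → ι) (v w : Fin n → O),
        StrictMono v → StrictMono w →
        (∀ i, v i ∈ A (a i)) → (∀ i, w i ∈ A (a i)) → f v = f w := by
  classical
  have hℵ0 : (ℵ₀ : Cardinal) < κ := by rwa [Cardinal.aleph_zero] at hκ
  choose B hB s hs using fun p : Σ n : ℕ, Fin n → ι => rowbottom hσ U hU p.1 (@f p.1) p.2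
  have hT : Cardinal.mk (Σ n : ℕ, Fin n → ι) < κ := by
    have hinj : Function.Injective (fun p : Σ n : ℕ, Fin n → ι => List.ofFn p.2) := by
      rintro ⟨n, fn⟩ ⟨m, fm⟩ h
      have hn : n = m := by
        have hl := congrArg List.length h
        simpa using hl
      subst hn
      simp only at h
      rw [List.ofFn_injective h]
    calc Cardinal.mk (Σ n : ℕ, Fin n → ι) ≤ Cardinal.mk (List ι) :=
          Cardinal.mk_le_of_injective hinj
      _ ≤ max ℵ₀ (Cardinal.mk ι) := Cardinal.mk_list_le_max ι
      _ < κ := max_lt hℵ0 hι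
  refine ⟨fun i => ⋂ p : Σ n : ℕ, Fin n → ι, ⋂ j : Fin p.1,
    (if p.2 j = i then B p j else univ), ?_, ?_⟩
  · intro i
    refine (hU i).2.2.2.2.1 _ hT _ (fun p => ?_)
    refine (hU i).2.2.2.2.1 (Fin p.1) ?_ _ (fun j => ?_)
    · exact lt_trans (by simpa using Cardinal.nat_lt_aleph0 p.1) hℵ0
    · by_cases h : p.2 j = i
      · rw [if_pos h]
        exact h ▸ hB p j
      · rw [if_neg h]
        exact (hU i).1
  · intro n a v w hv hw hvA hwA
    have hvB : ∀ j, v j ∈ B ⟨n, a⟩ j := by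
      intro j
      have h1 := Set.mem_iInter.mp (hvA j) ⟨n, a⟩
      have h2 := Set.mem_iInter.mp h1 j
      simpa using h2
    have hwB : ∀ j, w j ∈ B ⟨n, a⟩ j := by
      intro j
      have h1 := Set.mem_iInter.mp (hwA j) ⟨n, a⟩
      have h2 := Set.mem_iInter.mp h1 j
      simpa using h2
    rw [hs ⟨n, a⟩ v hv hvB, hs ⟨n, a⟩ w hw hwB]
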